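/- Let n ≥ 3 be odd and define f : {0,1}^n → {0,1} by f(0^n) = 1, f(1^n) = 0, and, for all other x, f(x) = 1 if |x| > n/2 and f(x) = 0 otherwise (the majority function). Then dist(f, Mono) = 2/2^n and (1/2^n)·Σ_{x ∈ {0,1}^n} √(I_f⁻(x)) ≥ n/2^n. -/

import Mathlib

open Finset

attribute [local instance] Classical.propDecidable

variable {n : ℕ}

/-- The edge of the hypercube along dimension `i` at `x` (the pair
`{x^{(i→0)}, x^{(i→1)}}`) is decreasing for `f`. -/
def decEdge (f : (Fin n → Bool) → Bool) (x : Fin n → Bool) (i : Fin n) : Prop :=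
  f (Function.update x i false) = true ∧ f (Function.update x i true) = false

/-- `x` with its `i`-th coordinate flipped. -/
def flipC (x : Fin n → Bool) (i : Fin n) : Fin n → Bool := Function.update x i (!(x i))

/-- `g` is monotone. -/
def monoB (g : (Fin n → Bool) → Bool) : Prop :=
  ∀ x y : Fin n → Bool, (∀ i, x i ≤ y i) → g x ≤ g y

/-- Distance of `f` to the set of monotone functions. -/
noncomputable def distMono (f : (Fin n → Bool) → Bool) : ℝ :=
  sInf {d : ℝ | ∃ g : (Fin n → Bool) → Bool, monoB g ∧
    d = ((univ.filter fun x => f x ≠ g x).card : ℝ) / 2 ^ n}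

/-- `I_f⁻(x)`: the number of decreasing edges of `f` incident on `x`. -/
noncomputable def Iminus (f : (Fin n → Bool) → Bool) (x : Fin n → Bool) : ℕ :=
  (univ.filter fun i => decEdge f x i).card

/-- The number of decreasing edges of `f` (each edge represented by its lower
endpoint together with its dimension). -/
noncomputable def numDecEdges (f : (Fin n → Bool) → Bool) : ℕ :=
  (univ.filter fun q : (Fin n → Bool) × Fin n => q.1 q.2 = false ∧ decEdge f q.1 q.2).card

/-- The event Capture(x, S, f). -/
def Capture (f : (Fin n → Bool) → Bool) (S : Finset (Fin n)) (x : Fin n → Bool) : Prop :=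
  ∃ i ∈ S, decEdge f x i ∧ ∀ j ∈ S \ {i}, ¬ decEdge f (flipC x i) j

/-- Hamming weight of `x` restricted to the coordinates in `M`. -/
noncomputable def wt (M : Finset (Fin n)) (x : Fin n → Bool) : ℕ :=
  (M.filter fun i => x i = true).card

/-- `g` is unate. -/
def unate (g : (Fin n → Bool) → Bool) : Prop :=
  ∃ σ : Fin n → Bool, monoB (fun x => g (fun i => xor (x i) (σ i)))

/-- Distance of `f` to the set of unate functions. -/
noncomputable def distUnate (f : (Fin n → Bool) → Bool) : ℝ :=
  sInf {d : ℝ | ∃ g : (Fin n → Bool) → Bool, unate g ∧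
    d = ((univ.filter fun x => f x ≠ g x).card : ℝ) / 2 ^ n}

/-- `g` is a `k`-junta. -/
def isJunta (k : ℕ) (g : (Fin n → Bool) → Bool) : Prop :=
  ∃ J : Finset (Fin n), J.card ≤ k ∧
    ∀ x y : Fin n → Bool, (∀ i ∈ J, x i = y i) → g x = g y

/-- Distance of `f` to the set of `k`-juntas. -/
noncomputable def distJunta (k : ℕ) (f : (Fin n → Bool) → Bool) : ℝ :=
  sInf {d : ℝ | ∃ g : (Fin n → Bool) → Bool, isJunta k g ∧
    d = ((univ.filter fun x => f x ≠ g x).card : ℝ) / 2 ^ n}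

/-- `I⁻_{f,red}(x)` for the coloring `col` (an edge is identified by its lower
endpoint along its dimension; `col e i = true` means the edge along dimension `i`
at `e` is red). -/
noncomputable def IredCol (f : (Fin n → Bool) → Bool)
    (col : (Fin n → Bool) → Fin n → Bool) (x : Fin n → Bool) : ℕ :=
  if f x = true then
    (univ.filter fun i => decEdge f x i ∧ col (Function.update x i false) i = true).card
  else 0

/-- `I⁻_{f,blue}(x)` for the coloring `col`. -/
noncomputable def IblueCol (f : (Fin n → Bool) → Bool)
    (col : (Fin n → Bool) → Fin n → Bool) (x : Fin n → Bool) : ℕ :=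
  if f x = false then
    (univ.filter fun i => decEdge f x i ∧ col (Function.update x i false) i = false).card
  else 0

/-- `Ψ_M`: the middle layer of the subcube `{0,1}^M`. -/
noncomputable def PsiSet (M : Finset (Fin n)) : Finset (↥M → Bool) :=
  univ.filter fun z => (univ.filter fun i : ↥M => z i = true).card = n / 4

/-- `x` is an erased point (for parameter `κ` and control set `M`). -/
def ErasedPt (κ : ℝ) (M : Finset (Fin n)) (x : Fin n → Bool) : Prop :=
  wt M x = n / 4 ∧ |(wt Mᶜ x : ℝ) - (n : ℝ) / 4| ≤ (n : ℝ) ^ κ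

/-- `Maj(x_{M̄})`: majority on the coordinates outside `M`. -/
noncomputable def MajBar (M : Finset (Fin n)) (x : Fin n → Bool) : Bool :=
  decide (n / 4 < wt Mᶜ x)

/-- `F` is a completion of the `D⁻` instance determined by `(M, P)`. -/
def DminusCompletion (κ : ℝ) (M : Finset (Fin n)) (P : Finset (↥M → Bool))
    (F : (Fin n → Bool) → Bool) : Prop :=
  (∀ x, wt M x < n / 4 → F x = false) ∧
  (∀ x, n / 4 < wt M x → F x = true) ∧
  (∀ x, wt M x = n / 4 → ¬ ErasedPt κ M x →
    F x = if (fun i : ↥M => x i.1) ∈ P then MajBar M x else !(MajBar M x))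

/-- The function `F` of Statement 12: `F(x) = 1` iff `|x_M| > n/4`, or
`|x_M| = n/4` and `x_M ∉ P`. -/
noncomputable def DplusF (M : Finset (Fin n)) (P : Finset (↥M → Bool))
    (x : Fin n → Bool) : Bool :=
  if n / 4 < wt M x then true
  else if wt M x = n / 4 ∧ (fun i : ↥M => x i.1) ∉ P then true
  else false

section Stmt17Aux

lemma stmt17_card_lt {n k : ℕ} (hk : k < n) :
    (univ.filter fun j : Fin n => (j : ℕ) < k).card = k := by
  have h : (univ.filter fun j : Fin n => (j : ℕ) < k) = Finset.Iio ⟨k, hk⟩ := by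
    ext j
    simp [Fin.lt_def]
  rw [h, Fin.card_Iio]

end Stmt17Aux

/-- for odd `n ≥ 3` and the majority function modified at
`0^n` and `1^n`, `dist(f, Mono) = 2/2^n` while `(1/2^n)·Σ_x √(I_f⁻(x)) ≥ n/2^n`. -/
theorem stmt17 (n : ℕ) (hn : 3 ≤ n) (hodd : Odd n) (f : (Fin n → Bool) → Bool)
    (hf : ∀ x : Fin n → Bool,
      f x = if x = (fun _ => false) then true
        else if x = (fun _ => true) then false
        else decide (n < 2 * (univ.filter fun i => x i = true).card)) :
    distMono f = 2 / 2 ^ n ∧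
    (n : ℝ) / 2 ^ n ≤ (1 / 2 ^ n) * ∑ x : Fin n → Bool, Real.sqrt (Iminus f x) := by
  obtain ⟨m, hm⟩ := hodd
  have hnpos : 0 < n := by omega
  set zeroV : Fin n → Bool := fun _ => false with hzeroV
  set oneV : Fin n → Bool := fun _ => true with honeV
  have hne01 : oneV ≠ zeroV := by
    intro h
    have := congrFun h ⟨0, hnpos⟩
    simp [zeroV, oneV] at this
  have hfzero : f zeroV = true := by rw [hf]; simp
  have hfone : f oneV = false := by rw [hf, if_neg hne01, if_pos rfl]
  -- weight helper
  have hwt : ∀ (k : ℕ), k < n →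
      ((univ.filter fun i : Fin n => (fun j : Fin n => decide ((j : ℕ) < k)) i = true).card = k) := by
    intro k hk
    have h : (univ.filter fun i : Fin n => (fun j : Fin n => decide ((j : ℕ) < k)) i = true)
        = univ.filter fun j : Fin n => (j : ℕ) < k := by
      ext j; simp
    rw [h, stmt17_card_lt hk]
  -- f on points of general weight
  have hfmid : ∀ x : Fin n → Bool, x ≠ zeroV → x ≠ oneV →
      f x = decide (n < 2 * (univ.filter fun i => x i = true).card) := by
    intro x h0 h1
    rw [hf, if_neg h0, if_neg h1]
  -- the two midpoints a (weight m+1) and b (weight m)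
  set a : Fin n → Bool := fun j => decide ((j : ℕ) < m + 1) with ha
  set b : Fin n → Bool := fun j => decide ((j : ℕ) < m) with hb
  have ha0 : a ≠ zeroV := by
    intro h; have := congrFun h ⟨0, hnpos⟩; simp [a, zeroV] at this
  have ha1 : a ≠ oneV := by
    intro h; have := congrFun h ⟨n - 1, by omega⟩; simp [a, oneV] at this; omega
  have hb0 : b ≠ zeroV := by
    intro h; have := congrFun h ⟨0, hnpos⟩
    simp [b, zeroV] at this; omega
  have hb1 : b ≠ oneV := by
    intro h; have := congrFun h ⟨n - 1, by omega⟩; simp [b, oneV] at this; omega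
  have hfa : f a = true := by
    rw [hfmid a ha0 ha1, hwt (m + 1) (by omega)]
    simp; omega
  have hfb : f b = false := by
    rw [hfmid b hb0 hb1, hwt m (by omega)]
    simp; omega
  have hab : ∀ i, b i ≤ a i := by
    intro i
    simp only [a, b]
    by_cases h : (i : ℕ) < m
    · simp [h, show (i:ℕ) < m + 1 by omega]
    · simp [h]
  have hle0 : ∀ (x : Fin n → Bool) i, zeroV i ≤ x i := by
    intro x i; simp [zeroV]
  have hle1 : ∀ (x : Fin n → Bool) i, x i ≤ oneV i := by
    intro x i; simp [oneV]
  -- the majority function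
  set g0 : (Fin n → Bool) → Bool :=
    fun x => decide (n < 2 * (univ.filter fun i => x i = true).card) with hg0
  have hmono : monoB g0 := by
    intro x y hxy
    simp only [g0]
    by_cases h : n < 2 * (univ.filter fun i => x i = true).card
    · have hsub : (univ.filter fun i => x i = true) ⊆ (univ.filter fun i => y i = true) := by
        intro i hi
        simp only [mem_filter, mem_univ, true_and] at hi ⊢
        have := hxy i
        rw [hi] at this
        exact Bool.eq_true_of_true_le this
      have hcard := Finset.card_le_card hsub
      simp [show n < 2 * (univ.filter fun i => y i = true).card by omega]
    · simp [h]
  have hDg0 : (univ.filter fun x => f x ≠ g0 x) = {zeroV, oneV} := by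
    ext x
    simp only [mem_filter, mem_univ, true_and, mem_insert, mem_singleton]
    constructor
    · intro hx
      by_contra hcon
      push_neg at hcon
      exact hx (hfmid x hcon.1 hcon.2)
    · rintro (rfl | rfl)
      · have hg1 : g0 zeroV = false := by
          simp only [g0]
          have h : (univ.filter fun i : Fin n => zeroV i = true) = ∅ := by
            ext i; simp [zeroV]
          rw [h]
          simp
        rw [hfzero, hg1]
        simp
      · have hg1 : g0 oneV = true := by
          simp only [g0, decide_eq_true_eq]
          rw [show (univ.filter fun i : Fin n => oneV i = true) = univ from by ext i; simp [oneV], card_univ, Fintype.card_fin]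
          omega
        rw [hfone, hg1]
        simp
  have hcardDg0 : (univ.filter fun x => f x ≠ g0 x).card = 2 := by
    rw [hDg0, card_insert_of_notMem (by simp [Ne.symm hne01]), card_singleton]
  -- lower bound: any monotone g disagrees on ≥ 2 points
  have hlow : ∀ g : (Fin n → Bool) → Bool, monoB g →
      2 ≤ (univ.filter fun x => f x ≠ g x).card := by
    intro g hg
    by_contra hcon
    push_neg at hcon
    have hone : ∀ x ∈ (univ.filter fun x => f x ≠ g x),
        ∀ y ∈ (univ.filter fun x => f x ≠ g x), x = y :=
      Finset.card_le_one.mp (by omega)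
    have hmem : ∀ x : Fin n → Bool, x ∉ (univ.filter fun x => f x ≠ g x) → g x = f x := by
      intro x hx
      simp only [mem_filter, mem_univ, true_and, not_not] at hx
      exact hx.symm
    by_cases h0 : zeroV ∈ (univ.filter fun x => f x ≠ g x)
    · -- everything else agrees; g a = true, g one = false
      have hga : g a = f a := hmem a (fun hmem' => ha0 (hone a hmem' zeroV h0))
      have hgone : g oneV = f oneV := hmem oneV (fun hmem' => hne01 (hone oneV hmem' zeroV h0))
      have := hg a oneV (hle1 a)
      rw [hga, hfa, hgone, hfone] at this
      exact absurd this (by simp)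
    · by_cases h1 : oneV ∈ (univ.filter fun x => f x ≠ g x)
      · have hgb : g b = f b := hmem b (fun hmem' => hb1 (hone b hmem' oneV h1))
        have hgzero : g zeroV = f zeroV := hmem zeroV h0
        have := hg zeroV b (hle0 b)
        rw [hgzero, hfzero, hgb, hfb] at this
        exact absurd this (by simp)
      · have hgzero : g zeroV = f zeroV := hmem zeroV h0
        have hgone : g oneV = f oneV := hmem oneV h1
        have := hg zeroV oneV (hle0 oneV)
        rw [hgzero, hfzero, hgone, hfone] at this
        exact absurd this (by simp)
  have hpow : (0:ℝ) < 2 ^ n := by positivity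
  -- part 1
  have part1 : distMono f = 2 / 2 ^ n := by
    have hSne : ((2:ℝ) / 2 ^ n) ∈ {d : ℝ | ∃ g : (Fin n → Bool) → Bool, monoB g ∧
        d = ((univ.filter fun x => f x ≠ g x).card : ℝ) / 2 ^ n} := by
      exact ⟨g0, hmono, by rw [hcardDg0]; norm_num⟩
    have hlb : ∀ d ∈ {d : ℝ | ∃ g : (Fin n → Bool) → Bool, monoB g ∧
        d = ((univ.filter fun x => f x ≠ g x).card : ℝ) / 2 ^ n}, (2:ℝ) / 2 ^ n ≤ d := by
      rintro d ⟨g, hg, rfl⟩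
      exact div_le_div_of_nonneg_right (by exact_mod_cast hlow g hg) hpow.le
    refine le_antisymm ?_ ?_
    · exact csInf_le ⟨2 / 2 ^ n, hlb⟩ hSne
    · exact le_csInf ⟨_, hSne⟩ hlb
  -- part 2
  set e : Fin n → (Fin n → Bool) := fun i j => decide (j = i) with he
  have heinj : Function.Injective e := by
    intro i i' h
    have := congrFun h i
    simp [e] at this
    exact this
  have hIe : ∀ i : Fin n, 1 ≤ Iminus f (e i) := by
    intro i
    rw [Iminus]
    apply Finset.card_pos.mpr
    refine ⟨i, mem_filter.mpr ⟨mem_univ i, ?_, ?_⟩⟩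
    · -- f (update (e i) i false) = true
      have : Function.update (e i) i false = zeroV := by
        funext j
        by_cases hj : j = i <;> simp [Function.update, hj, e, zeroV]
      rw [this, hfzero]
    · -- f (update (e i) i true) = false
      have hupd : Function.update (e i) i true = e i := by
        funext j
        by_cases hj : j = i <;> simp [Function.update, hj, e]
      rw [hupd]
      have he0 : e i ≠ zeroV := by
        intro h; have := congrFun h i; simp [e, zeroV] at this
      have he1 : e i ≠ oneV := by
        intro h
        have hnt : Nontrivial (Fin n) :=
          ⟨⟨⟨0, by omega⟩, ⟨1, by omega⟩, by simp [Fin.ext_iff]⟩⟩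
        obtain ⟨j, hj⟩ := exists_ne i
        have := congrFun h j
        simp [e, oneV] at this
        exact hj this
      rw [hfmid _ he0 he1]
      have : (univ.filter fun j => e i j = true) = {i} := by
        ext j; simp [e]
      rw [this, card_singleton]
      simp
      omega
  have hsum : (n : ℝ) ≤ ∑ x : Fin n → Bool, Real.sqrt (Iminus f x) := by
    have h1 : (n : ℝ) = ∑ _i : Fin n, (1:ℝ) := by simp
    have h2 : ∑ _i : Fin n, (1:ℝ) ≤ ∑ i : Fin n, Real.sqrt (Iminus f (e i)) := by
      apply Finset.sum_le_sum
      intro i _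
      rw [show (1:ℝ) = Real.sqrt 1 by simp]
      apply Real.sqrt_le_sqrt
      exact_mod_cast hIe i
    have h3 : ∑ i : Fin n, Real.sqrt (Iminus f (e i))
        = ∑ x ∈ univ.image e, Real.sqrt (Iminus f x) := by
      rw [Finset.sum_image (fun i _ i' _ h => heinj h)]
    have h4 : ∑ x ∈ univ.image e, Real.sqrt (Iminus f x)
        ≤ ∑ x : Fin n → Bool, Real.sqrt (Iminus f x) := by
      apply Finset.sum_le_sum_of_subset_of_nonneg (subset_univ _)
      intro x _ _
      exact Real.sqrt_nonneg _
    linarith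
  refine ⟨part1, ?_⟩
  rw [one_div, inv_mul_eq_div]
  exact div_le_div_of_nonneg_right hsum hpow.le
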